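/- Let R be a commutative ring and A ∈ Mat_{m×n}(R) with m ≤ n. Then for every j < m one has Ann.Coker(A) · I_j(A) ⊆ I_{j+1}(A), and moreover Ann.Coker(A)^m ⊆ I_m(A) ⊆ Ann.Coker(A) ⊆ √(I_m(A)). -/

import Mathlib

/-- The determinantal ideal `I_j(A)` generated by the `j × j` minors of `A`
(with `I_0(A) = R`). -/
def detIdeal {R : Type*} [CommRing R] {m n : ℕ} (A : Matrix (Fin m) (Fin n) R)
    (j : ℕ) : Ideal R :=
  Ideal.span { x | ∃ (r : Fin j → Fin m) (c : Fin j → Fin n), x = (A.submatrix r c).det }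

/-- `Ann.Coker(A) = Ann(R^m / A(R^n))`, the annihilator of the cokernel of `A`. -/
noncomputable def annCoker {R : Type*} [CommRing R] {m n : ℕ}
    (A : Matrix (Fin m) (Fin n) R) : Ideal R :=
  Module.annihilator R ((Fin m → R) ⧸ LinearMap.range A.mulVecLin)

lemma mem_annCoker_iff {R : Type*} [CommRing R] {m n : ℕ}
    (A : Matrix (Fin m) (Fin n) R) {a : R} :
    a ∈ annCoker A ↔ ∀ x : Fin m → R, a • x ∈ LinearMap.range A.mulVecLin := by
  rw [annCoker, Module.mem_annihilator]
  constructor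
  · intro h x
    have := h (Submodule.Quotient.mk x)
    rwa [← Submodule.Quotient.mk_smul, Submodule.Quotient.mk_eq_zero] at this
  · intro h y
    obtain ⟨x, rfl⟩ := Submodule.Quotient.mk_surjective _ y
    rw [← Submodule.Quotient.mk_smul, Submodule.Quotient.mk_eq_zero]
    exact h x

lemma my_det_updateRow_sum {R : Type*} [CommRing R] {s : ℕ}
    (M : Matrix (Fin s) (Fin s) R) (i : Fin s) {ι : Type*} (t : Finset ι)
    (v : ι → R) (w : ι → Fin s → R) :
    (M.updateRow i (∑ k ∈ t, v k • w k)).det = ∑ k ∈ t, v k * (M.updateRow i (w k)).det := by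
  classical
  induction t using Finset.induction_on with
  | empty =>
      simp only [Finset.sum_empty]
      exact Matrix.det_eq_zero_of_row_eq_zero i (by simp)
  | @insert k t hk ih =>
      rw [Finset.sum_insert hk, Matrix.det_updateRow_add, Matrix.det_updateRow_smul, ih,
        Finset.sum_insert hk]

lemma det_mem_detIdeal {R : Type*} [CommRing R] {m n : ℕ}
    (A : Matrix (Fin m) (Fin n) R) {j : ℕ} (r : Fin j → Fin m) (c : Fin j → Fin n) :
    (A.submatrix r c).det ∈ detIdeal A j :=
  Ideal.subset_span ⟨r, c, rfl⟩

open Matrix in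
lemma annCoker_mul_detIdeal {R : Type*} [CommRing R] {m n : ℕ}
    (A : Matrix (Fin m) (Fin n) R) {j : ℕ} (hmn : m ≤ n) (hj : j < m) :
    annCoker A * detIdeal A j ≤ detIdeal A (j + 1) := by
  classical
  rw [Ideal.mul_le]
  intro a ha b hb
  induction hb using Submodule.span_induction with
  | zero => simpa using (detIdeal A (j + 1)).zero_mem
  | add x y _ _ hx hy => rw [mul_add]; exact (detIdeal A (j + 1)).add_mem hx hy
  | smul s x _ hx =>
      rw [smul_eq_mul, mul_comm s x, ← mul_assoc]
      exact Ideal.mul_mem_right s _ hx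
  | mem b hbgen =>
      obtain ⟨r, c, rfl⟩ := hbgen
      by_cases hr : Function.Injective r
      · -- find a row index not hit by r
        have hns : ¬ Function.Surjective r := by
          intro hs
          have := Fintype.card_le_of_surjective r hs
          simp only [Fintype.card_fin] at this
          omega
        rw [Function.Surjective] at hns
        push_neg at hns
        obtain ⟨i, hi⟩ := hns
        obtain ⟨v, hv⟩ := (mem_annCoker_iff A).mp ha ((Pi.single i 1 : Fin m → R))
        have hn0 : 0 < n := lt_of_lt_of_le (lt_of_le_of_lt (Nat.zero_le j) hj) hmn
        set r' : Fin (j + 1) → Fin m := Fin.snoc r i with hr'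
        set N : Matrix (Fin (j + 1)) (Fin (j + 1)) R :=
          A.submatrix r' (Fin.snoc c ⟨0, hn0⟩) with hN
        set lst : Fin (j + 1) := Fin.last j
        set u : Fin (j + 1) → R := fun p => (a • (Pi.single i 1 : Fin m → R)) (r' p) with hu
        have hr'cast : ∀ q : Fin j, r' q.castSucc = r q := fun q => by
          rw [hr']; exact Fin.snoc_castSucc ..
        have hr'last : r' lst = i := by
          rw [hr']; exact Fin.snoc_last ..
        have husingle : u = Pi.single lst a := by
          funext p
          induction p using Fin.lastCases with
          | last =>
              have h1 : r' (Fin.last j) = i := hr'last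
              have h2 : u (Fin.last j) = a := by
                rw [hu]; dsimp only
                rw [h1]; simp
              rw [h2]
              exact (Pi.single_eq_same (M := fun _ : Fin (j+1) => R) lst a).symm
          | cast q =>
              have h1 : r' q.castSucc ≠ i := by rw [hr'cast]; exact hi q
              have h2 : q.castSucc ≠ lst := (Fin.castSucc_lt_last q).ne
              simp [hu, Pi.single_eq_of_ne h1, Pi.single_eq_of_ne h2]
        -- Way A : det (N.updateCol lst u) = a * det (A.submatrix r c)
        have keyA : (N.updateCol lst u).det = a * (A.submatrix r c).det := by
          rw [Matrix.det_succ_column _ lst]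
          rw [Finset.sum_eq_single lst]
          · have hsub : (N.updateCol lst u).submatrix lst.succAbove lst.succAbove
                = A.submatrix r c := by
              ext p q
              have h2 : (lst.succAbove q) ≠ lst := Fin.succAbove_ne lst q
              simp only [Matrix.submatrix_apply, Matrix.updateCol_apply, if_neg h2, hN]
              rw [show lst.succAbove = Fin.castSucc from Fin.succAbove_last]
              simp [hr'cast]
            rw [hsub]
            have : (N.updateCol lst u) lst lst = a := by
              rw [Matrix.updateCol_self, husingle, Pi.single_eq_same]
            rw [this]
            have : ((lst : Fin (j+1)) + (lst : Fin (j+1)) : ℕ) = j + j := rfl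
            rw [this, Even.neg_one_pow ⟨j, rfl⟩, one_mul]
          · intro p _ hp
            have : (N.updateCol lst u) p lst = 0 := by
              rw [Matrix.updateCol_self, husingle, Pi.single_eq_of_ne hp]
            rw [this]; ring
          · intro h; exact absurd (Finset.mem_univ lst) h
        -- Way B : det (N.updateCol lst u) ∈ detIdeal A (j+1)
        have hucomb : u = ∑ k : Fin n, v k • (fun p => A (r' p) k) := by
          funext p
          have : (a • (Pi.single i 1 : Fin m → R)) (r' p) = (A.mulVec v) (r' p) := by
            rw [show A.mulVec v = a • (Pi.single i 1 : Fin m → R) from hv]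
          rw [hu]
          simp only [this, Matrix.mulVec, dotProduct, Finset.sum_apply, Pi.smul_apply,
            smul_eq_mul]
          exact Finset.sum_congr rfl fun k _ => mul_comm _ _
        have keyB : (N.updateCol lst u).det ∈ detIdeal A (j + 1) := by
          rw [← Matrix.det_transpose, ← Matrix.updateRow_transpose, hucomb,
            my_det_updateRow_sum]
          refine Ideal.sum_mem _ fun k _ => Ideal.mul_mem_left _ _ ?_
          have hmat : (Matrix.updateRow Nᵀ lst fun p => A (r' p) k)
              = (A.submatrix r' (Fin.snoc c k))ᵀ := by
            ext p q
            induction p using Fin.lastCases with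
            | last =>
                simp [Matrix.updateRow_self, lst, Fin.snoc_last]
            | cast p' =>
                have hne : p'.castSucc ≠ lst := (Fin.castSucc_lt_last p').ne
                simp [Matrix.updateRow_ne hne, hN, Fin.snoc_castSucc]
          rw [hmat, Matrix.det_transpose]
          exact det_mem_detIdeal A r' (Fin.snoc c k)
        rw [← keyA]; exact keyB
      · -- non-injective rows: the minor is zero
        obtain ⟨p, q, hpq, hne⟩ := Function.not_injective_iff.mp hr
        have : (A.submatrix r c).det = 0 :=
          Matrix.det_zero_of_row_eq hne (by ext q'; simp [hpq])
        rw [this, mul_zero]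
        exact (detIdeal A (j + 1)).zero_mem

open Matrix in
lemma detIdeal_le_annCoker {R : Type*} [CommRing R] {m n : ℕ}
    (A : Matrix (Fin m) (Fin n) R) :
    detIdeal A m ≤ annCoker A := by
  classical
  rw [detIdeal, Ideal.span_le]
  rintro x ⟨r, c, rfl⟩
  rw [SetLike.mem_coe, mem_annCoker_iff]
  intro x
  by_cases hr : Function.Injective r
  · have hb : Function.Bijective r := ⟨hr, (Finite.injective_iff_bijective.mp hr).2⟩
    set e : Equiv.Perm (Fin m) := Equiv.ofBijective r hb with he
    set B : Matrix (Fin m) (Fin m) R := A.submatrix id c with hBdef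
    have hsub : A.submatrix r c = B.submatrix e id := by
      ext p q
      simp [hBdef, he, Equiv.ofBijective]
    have hdet : (A.submatrix r c).det = ((Equiv.Perm.sign e : ℤ) : R) * B.det := by
      rw [hsub, Matrix.det_permute]
    set E : Matrix (Fin n) (Fin m) R := Matrix.of fun l q => if c q = l then (1 : R) else 0
      with hEdef
    have hAE : A * E = B := by
      ext p q
      simp only [Matrix.mul_apply, hEdef, Matrix.of_apply, mul_ite, mul_one, mul_zero,
        hBdef, Matrix.submatrix_apply, id_eq]
      rw [Finset.sum_ite_eq Finset.univ (c q) (A p)]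
      simp
    have hB : B.det • x ∈ LinearMap.range A.mulVecLin := by
      refine ⟨(E * B.adjugate).mulVec x, ?_⟩
      show A.mulVec ((E * B.adjugate).mulVec x) = B.det • x
      rw [Matrix.mulVec_mulVec, ← Matrix.mul_assoc, hAE, Matrix.mul_adjugate,
        Matrix.smul_mulVec, Matrix.one_mulVec]
    rw [hdet, mul_smul]
    exact Submodule.smul_mem _ _ hB
  · obtain ⟨p, q, hpq, hne⟩ := Function.not_injective_iff.mp hr
    have h0 : (A.submatrix r c).det = 0 :=
      Matrix.det_zero_of_row_eq hne (by ext q'; simp [hpq])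
    rw [h0, zero_smul]
    exact Submodule.zero_mem _

theorem stmt_6 {R : Type*} [CommRing R] {m n : ℕ} (hmn : m ≤ n)
    (A : Matrix (Fin m) (Fin n) R) :
    (∀ j < m, annCoker A * detIdeal A j ≤ detIdeal A (j + 1)) ∧
      annCoker A ^ m ≤ detIdeal A m ∧
      detIdeal A m ≤ annCoker A ∧
      annCoker A ≤ (detIdeal A m).radical := by
  have h1 : ∀ j < m, annCoker A * detIdeal A j ≤ detIdeal A (j + 1) :=
    fun j hj => annCoker_mul_detIdeal A hmn hj
  have htop : detIdeal A 0 = ⊤ := by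
    rw [Ideal.eq_top_iff_one]
    exact Ideal.subset_span ⟨Fin.elim0, Fin.elim0, Matrix.det_fin_zero.symm⟩
  have h2 : ∀ j, j ≤ m → annCoker A ^ j ≤ detIdeal A j := by
    intro j
    induction j with
    | zero => intro _; rw [pow_zero, Ideal.one_eq_top, htop]
    | succ j ih =>
        intro hjm
        calc annCoker A ^ (j + 1) = annCoker A * annCoker A ^ j := by
              rw [pow_succ, mul_comm]
          _ ≤ annCoker A * detIdeal A j :=
              Ideal.mul_mono_right (ih (Nat.le_of_succ_le hjm))
          _ ≤ detIdeal A (j + 1) := h1 j hjm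
  refine ⟨h1, h2 m le_rfl, detIdeal_le_annCoker A, fun a ha => ?_⟩
  exact Ideal.mem_radical_iff.mpr ⟨m, h2 m le_rfl (Ideal.pow_mem_pow ha m)⟩
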